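/- arXiv:1501.02165 — 3 statements merged into one kernel-verified Lean document; each statement's English description precedes it below -/
import Mathlib

section
/- If a distributed history H with a finite set of update events admits a linearization (a sequential ordering of all its events extending the program order) of the events excluding some finite set of queries that is recognized by the sequential specification of the abstract data type, then H is eventually consistent: there exists a state s such that only finitely many query events return a value different from the output function applied to s. -/
/-- An update-query abstract data type. -/
structure UQADT (U Qi Qo S : Type*) where
  s0 : S
  T : S → U → S
  G : S → Qi → Qo

/-- A distributed history: events labelled by updates or queries, with a program order. -/
structure Hist (U Qi Qo E : Type*) where
  lab : E → U ⊕ (Qi × Qo)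
  po : E → E → Prop

variable {U Qi Qo S E : Type*}

def Hist.upd (h : Hist U Qi Qo E) : Set E := {e | ∃ u, h.lab e = Sum.inl u}
def Hist.qry (h : Hist U Qi Qo E) : Set E := {e | ∃ q, h.lab e = Sum.inr q}

/-- `w` is an enumeration (an initial segment of `ℕ`, possibly finite) of the
set `F` of events, compatible with the relation `r`. -/
def IsLinz (r : E → E → Prop) (F : Set E) (w : ℕ → Option E) : Prop :=
  (∀ i j a, w i = some a → w j = some a → i = j) ∧
  (∀ a ∈ F, ∃ i, w i = some a) ∧
  (∀ i a, w i = some a → a ∈ F) ∧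
  (∀ i j a b, i < j → w i = some a → w j = some b → ¬ r b a) ∧
  (∀ i j, i ≤ j → w j ≠ none → w i ≠ none)

/-- The sequential word read off along `w` is recognized by `O`. -/
def Recog (O : UQADT U Qi Qo S) (h : Hist U Qi Qo E) (w : ℕ → Option E) : Prop :=
  ∃ st : ℕ → S, st 0 = O.s0 ∧ ∀ i,
    match w i with
    | none => st (i+1) = st i
    | some e =>
      match h.lab e with
      | Sum.inl u => st (i+1) = O.T (st i) u
      | Sum.inr (qi, qo) => st (i+1) = st i ∧ O.G (st i) qi = qo

/-- Eventual consistency. -/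
def EC (O : UQADT U Qi Qo S) (h : Hist U Qi Qo E) : Prop :=
  h.upd.Infinite ∨ ∃ s : S,
    {e : E | ∃ qi qo, h.lab e = Sum.inr (qi, qo) ∧ O.G s qi ≠ qo}.Finite

/-- Update consistency. -/
def UC (O : UQADT U Qi Qo S) (h : Hist U Qi Qo E) : Prop :=
  h.upd.Infinite ∨ ∃ Q' : Set E, Q' ⊆ h.qry ∧ Q'.Finite ∧
    ∃ w, IsLinz h.po Q'ᶜ w ∧ Recog O h w

/-- A reflexive relation is acyclic if its strict part has no cycles. -/
def Acyclic (r : E → E → Prop) : Prop :=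
  ∀ e, ¬ Relation.TransGen (fun a b => r a b ∧ a ≠ b) e e

/-- Strong update consistency. -/
def SUC (O : UQADT U Qi Qo S) (h : Hist U Qi Qo E) : Prop :=
  ∃ vis le : E → E → Prop,
    (∀ e, vis e e) ∧ Acyclic vis ∧
    (∀ e e', h.po e e' → vis e e') ∧
    (∀ u ∈ h.upd, {e | ¬ vis u e}.Finite) ∧
    (∀ e e' e'', vis e e' → h.po e' e'' → vis e e'') ∧
    IsLinearOrder E le ∧ (∀ e e', vis e e' → le e e') ∧
    (∀ q ∈ h.qry, ∃ w,
      IsLinz (fun a b => le a b ∧ a ≠ b) ({u | u ∈ h.upd ∧ vis u q} ∪ {q}) w ∧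
      Recog O h w)

/-- Strong eventual consistency. -/
def SEC (O : UQADT U Qi Qo S) (h : Hist U Qi Qo E) : Prop :=
  ∃ vis : E → E → Prop,
    (∀ e, vis e e) ∧ Acyclic vis ∧
    (∀ e e', h.po e e' → vis e e') ∧
    (∀ u ∈ h.upd, {e | ¬ vis u e}.Finite) ∧
    (∀ e e' e'', vis e e' → h.po e' e'' → vis e e'') ∧
    ∀ V ⊆ h.upd, ∃ s : S, ∀ e qi qo, h.lab e = Sum.inr (qi, qo) →
      {u | u ∈ h.upd ∧ vis u e} = V → O.G s qi = qo

/-- if a history with finitely many updates admits a linearization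
of all events except a finite set of queries that is recognized by the
specification, then it is eventually consistent. -/
theorem stmt0 (O : UQADT U Qi Qo S) (h : Hist U Qi Qo E)
    (hord : IsStrictOrder E h.po) (hpred : ∀ e : E, {e' | h.po e' e}.Finite)
    (hUfin : h.upd.Finite)
    (Q' : Set E) (hQ'sub : Q' ⊆ h.qry) (hQ'fin : Q'.Finite)
    (w : ℕ → Option E) (hlin : IsLinz h.po Q'ᶜ w) (hrec : Recog O h w) :
    ∃ s : S, {e : E | ∃ qi qo, h.lab e = Sum.inr (qi, qo) ∧ O.G s qi ≠ qo}.Finite := by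
  obtain ⟨hinj, hsurj, hmem, horder, hseg⟩ := hlin
  obtain ⟨st, hst0, hstep⟩ := hrec
  -- the set of positions holding update events is finite
  have hUpdPos : {i : ℕ | ∃ e ∈ h.upd, w i = some e}.Finite := by
    have hsub : {i : ℕ | ∃ e ∈ h.upd, w i = some e} ⊆
        ⋃ e ∈ h.upd, {i : ℕ | w i = some e} := by
      rintro i ⟨e, he, hw⟩
      exact Set.mem_biUnion he hw
    refine Set.Finite.subset (Set.Finite.biUnion hUfin (fun e _ => ?_)) hsub
    apply Set.Subsingleton.finite
    intro i hi j hj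
    exact hinj i j e hi hj
  obtain ⟨N0, hN0⟩ := hUpdPos.bddAbove
  set N := N0 + 1 with hNdef
  have hNbig : ∀ i, (∃ e ∈ h.upd, w i = some e) → i < N :=
    fun i hi => Nat.lt_succ_of_le (hN0 hi)
  -- past N, the state stabilizes
  have hstab : ∀ i, N ≤ i → st i = st N := by
    intro i hi
    induction i, hi using Nat.le_induction with
    | base => rfl
    | succ i hi ih =>
      have hs := hstep i
      rw [← ih]
      cases hw : w i with
      | none => simp only [hw] at hs; exact hs
      | some e =>
        cases hl : h.lab e with
        | inl u =>
          exact absurd (hNbig i ⟨e, ⟨u, hl⟩, hw⟩) (Nat.not_lt.mpr hi)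
        | inr q =>
          obtain ⟨qi, qo⟩ := q
          simp only [hw, hl] at hs
          exact hs.1
  refine ⟨st N, ?_⟩
  have hcover : {e : E | ∃ qi qo, h.lab e = Sum.inr (qi, qo) ∧ O.G (st N) qi ≠ qo} ⊆
      Q' ∪ ⋃ i ∈ Finset.range N, {e : E | w i = some e} := by
    rintro e ⟨qi, qo, hl, hne⟩
    by_cases hQ : e ∈ Q'
    · exact Or.inl hQ
    · right
      obtain ⟨i, hwi⟩ := hsurj e hQ
      have hiN : i < N := by
        by_contra hge
        have hs := hstep i
        simp only [hwi, hl] at hs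
        have := hstab i (Nat.le_of_not_lt hge)
        rw [this] at hs
        exact hne hs.2
      exact Set.mem_biUnion (Finset.mem_range.mpr hiN) hwi
  refine Set.Finite.subset (Set.Finite.union hQ'fin ?_) hcover
  refine Set.Finite.biUnion (Finset.finite_toSet _) (fun i _ => ?_)
  apply Set.Subsingleton.finite
  intro a ha b hb
  rw [Set.mem_setOf_eq] at ha hb
  rw [ha] at hb
  exact Option.some.inj hb
end

section
/- Every update consistent distributed history is eventually consistent. -/
variable {U Qi Qo S E : Type*}

/-- every update consistent history is eventually consistent. -/
theorem stmt1 (O : UQADT U Qi Qo S) (h : Hist U Qi Qo E)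
    (hord : IsStrictOrder E h.po) (hpred : ∀ e : E, {e' | h.po e' e}.Finite)
    (huc : UC O h) : EC O h := by
  rcases huc with hinf | ⟨Q', hQ'sub, hQ'fin, w, hlin, hrec⟩
  · exact Or.inl hinf
  by_cases hinf : h.upd.Infinite
  · exact Or.inl hinf
  right
  obtain ⟨hinj, hsurj, hmem, -, -⟩ := hlin
  obtain ⟨st, hst0, hstep⟩ := hrec
  have hupdfin : h.upd.Finite := Set.not_infinite.mp hinf
  have hIfin : (w ⁻¹' (Option.some '' h.upd)).Finite := by
    apply Set.Finite.preimage _ (hupdfin.image _)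
    rintro i hi j hj hij
    obtain ⟨a, -, ha⟩ := hi
    exact hinj i j a ha.symm (hij.symm.trans ha.symm)
  obtain ⟨N0, hN0⟩ := hIfin.bddAbove
  set N := N0 + 1 with hNdef
  have hnotin : ∀ i, N ≤ i → w i ∉ Option.some '' h.upd := by
    intro i hi hmem'
    have : i ≤ N0 := hN0 hmem'
    omega
  have hconst : ∀ k, st (N + k) = st N := by
    intro k
    induction k with
    | zero => rfl
    | succ k ih =>
      have hstep' := hstep (N + k)
      have heq : st (N + k + 1) = st (N + k) := by
        cases hw : w (N + k) with
        | none => rw [hw] at hstep'; exact hstep'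
        | some e =>
          cases hlab : h.lab e with
          | inl u =>
            exact absurd ⟨e, ⟨u, hlab⟩, hw.symm⟩ (hnotin _ (Nat.le_add_right _ _))
          | inr q =>
            obtain ⟨qi, qo⟩ := q
            simp only [hw, hlab] at hstep'
            exact hstep'.1
      rw [show N + (k + 1) = N + k + 1 from rfl, heq, ih]
  have h2 : ({e : E | ∃ i < N, w i = some e}).Finite := by
    have hsub : {e : E | ∃ i < N, w i = some e} ⊆ ⋃ i ∈ Set.Iio N, {e | w i = some e} := by
      rintro e ⟨i, hi, hw⟩
      exact Set.mem_biUnion hi hw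
    refine Set.Finite.subset (Set.Finite.biUnion (Set.finite_Iio N) fun i _ => ?_) hsub
    apply Set.Subsingleton.finite
    intro a ha b hb
    exact Option.some.inj (ha.symm.trans hb)
  refine ⟨st N, Set.Finite.subset (hQ'fin.union h2) ?_⟩
  rintro e ⟨qi, qo, hlab, hne⟩
  by_cases heQ : e ∈ Q'
  · exact Or.inl heQ
  · obtain ⟨i, hw⟩ := hsurj e heQ
    rcases lt_or_ge i N with hi | hi
    · exact Or.inr ⟨i, hi, hw⟩
    · exfalso
      have hstep' := hstep i
      simp only [hw, hlab] at hstep'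
      have hsi : st i = st N := by
        have := hconst (i - N)
        rwa [Nat.add_sub_cancel' hi] at this
      exact hne (hsi ▸ hstep'.2)
end

section
/- Every strong update consistent distributed history is strong eventually consistent. -/
variable {U Qi Qo S E : Type*}

/-- Two linearizations (w.r.t. a total relation) of the same set coincide. -/
lemma linz_unique {r : E → E → Prop}
    (htot : ∀ a b : E, a ≠ b → r a b ∨ r b a)
    {F : Set E} {w w' : ℕ → Option E}
    (hw : IsLinz r F w) (hw' : IsLinz r F w') : w = w' := by
  obtain ⟨inj, surj, mem, ord, pack⟩ := hw
  obtain ⟨inj', surj', mem', ord', pack'⟩ := hw'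
  funext i
  induction i using Nat.strong_induction_on with
  | _ i ih =>
    cases hwi : w i with
    | none =>
      cases hwi' : w' i with
      | none => rfl
      | some b =>
        obtain ⟨k, hk⟩ := surj b (mem' i b hwi')
        have hik : i ≤ k := by
          by_contra hlt
          push_neg at hlt
          have hk' : w' k = some b := (ih k hlt) ▸ hk
          exact absurd (inj' k i b hk' hwi') (Nat.ne_of_lt hlt)
        exact absurd (pack i k hik (by simp [hk])) (by simp [hwi])
    | some a =>
      cases hwi' : w' i with
      | none =>
        obtain ⟨k, hk⟩ := surj' a (mem i a hwi)
        have hik : i ≤ k := by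
          by_contra hlt
          push_neg at hlt
          have hk' : w k = some a := (ih k hlt).symm ▸ hk
          exact absurd (inj k i a hk' hwi) (Nat.ne_of_lt hlt)
        exact absurd (pack' i k hik (by simp [hk])) (by simp [hwi'])
      | some b =>
        by_cases hab : a = b
        · rw [hab]
        · obtain ⟨k, hk⟩ := surj' a (mem i a hwi)
          have hik : i < k := by
            rcases Nat.lt_trichotomy k i with hlt | heq | hgt
            · have hk' : w k = some a := (ih k hlt).symm ▸ hk
              exact absurd (inj k i a hk' hwi) (Nat.ne_of_lt hlt)
            · exact absurd (heq ▸ hk) (by rw [hwi']; exact fun hc => hab (Option.some_injective _ hc).symm)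
            · exact hgt
          have h1 : ¬ r a b := ord' i k b a hik hwi' hk
          obtain ⟨m, hm⟩ := surj b (mem' i b hwi')
          have him : i < m := by
            rcases Nat.lt_trichotomy m i with hlt | heq | hgt
            · have hm' : w' m = some b := (ih m hlt) ▸ hm
              exact absurd (inj' m i b hm' hwi') (Nat.ne_of_lt hlt)
            · exact absurd (heq ▸ hm) (by rw [hwi]; exact fun hc => hab (Option.some_injective _ hc))
            · exact hgt
          have h2 : ¬ r b a := ord i m a b him hwi hm
          rcases htot a b hab with h | h
          · exact absurd h h1
          · exact absurd h h2

open Classical in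
/-- Replacing the maximal element `e` of a linearized set `V ∪ {e}` by
another element `e0` above `V` yields a linearization of `V ∪ {e0}`. -/
lemma linz_swap {r : E → E → Prop} {V : Set E} {e e0 : E}
    (heV : e ∉ V) (he0V : e0 ∉ V)
    (hVe : ∀ a ∈ V, r a e) (hVe0 : ∀ a ∈ V, ¬ r e0 a)
    {w : ℕ → Option E} (hw : IsLinz r (V ∪ {e}) w) :
    IsLinz r (V ∪ {e0}) (fun i => if w i = some e then some e0 else w i) := by
  by_cases hee : e0 = e
  · subst hee
    have heq : (fun i => if w i = some e0 then some e0 else w i) = w := by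
      funext i
      by_cases hi : w i = some e0 <;> simp [hi]
    rw [heq]; exact hw
  obtain ⟨inj, surj, mem, ord, pack⟩ := hw
  have hne0 : ∀ i, w i ≠ some e0 := by
    intro i hcon
    rcases mem i e0 hcon with h1 | h1
    · exact he0V h1
    · exact hee h1
  refine ⟨?_, ?_, ?_, ?_, ?_⟩
  · intro i j a hi hj
    simp only at hi hj
    by_cases h1 : w i = some e <;> by_cases h2 : w j = some e <;>
      simp only [h1, h2, if_pos, if_neg, if_true, if_false] at hi hj
    · exact inj i j e h1 h2
    · exact absurd (hi ▸ hj) (hne0 j)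
    · exact absurd (hj ▸ hi) (hne0 i)
    · exact inj i j a hi hj
  · intro a ha
    rcases ha with ha | ha
    · obtain ⟨i, hi⟩ := surj a (Or.inl ha)
      have hne : w i ≠ some e := by
        intro hcon
        rw [hi] at hcon
        exact heV ((Option.some_injective _ hcon) ▸ ha)
      exact ⟨i, by simp only [if_neg hne]; exact hi⟩
    · obtain ⟨i, hi⟩ := surj e (Or.inr rfl)
      exact ⟨i, by simp only [if_pos hi]; rw [ha]⟩
  · intro i a hia
    simp only at hia
    by_cases h1 : w i = some e
    · rw [if_pos h1] at hia
      exact Or.inr (Option.some_injective _ hia).symm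
    · rw [if_neg h1] at hia
      rcases mem i a hia with h2 | h2
      · exact Or.inl h2
      · exact absurd (h2 ▸ hia) h1
  · intro i j a b hij hi hj
    simp only at hi hj
    by_cases h1 : w i = some e <;> by_cases h2 : w j = some e <;>
      simp only [h1, h2, if_pos, if_neg, if_true, if_false] at hi hj
    · exact absurd (inj i j e h1 h2) (Nat.ne_of_lt hij)
    · -- e at position i, b later: impossible since r b e for b ∈ V
      have hbV : b ∈ V := by
        rcases mem j b hj with h3 | h3
        · exact h3
        · exact absurd (h3 ▸ hj) h2
      exact absurd (hVe b hbV) (ord i j e b hij h1 hj)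
    · -- b = e0 at position j, a ∈ V earlier
      have haV : a ∈ V := by
        rcases mem i a hi with h3 | h3
        · exact h3
        · exact absurd (h3 ▸ hi) h1
      have hbe0 : b = e0 := (Option.some_injective _ hj).symm
      rw [hbe0]
      exact hVe0 a haV
    · exact ord i j a b hij hi hj
  · intro i j hij hj
    simp only at hj ⊢
    have hj' : w j ≠ none := by
      by_cases h2 : w j = some e
      · rw [h2]; simp
      · rw [if_neg h2] at hj; exact hj
    have := pack i j hij hj'
    by_cases h1 : w i = some e <;> simp [h1, this]

/-- every strong update consistent history is strong eventually
consistent. -/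
theorem stmt3 (O : UQADT U Qi Qo S) (h : Hist U Qi Qo E)
    (hord : IsStrictOrder E h.po) (hpred : ∀ e : E, {e' | h.po e' e}.Finite)
    (hsuc : SUC O h) : SEC O h := by
  classical
  obtain ⟨vis, le, hrefl, hacyc, hpo, hfin, hgrow, hlin, hvisle, hrec⟩ := hsuc
  haveI := hlin
  have htot : ∀ a b : E, a ≠ b →
      (le a b ∧ a ≠ b) ∨ (le b a ∧ b ≠ a) := by
    intro a b hab
    rcases Std.Total.total (r := le) a b with h1 | h1
    · exact Or.inl ⟨h1, hab⟩
    · exact Or.inr ⟨h1, hab.symm⟩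
  refine ⟨vis, hrefl, hacyc, hpo, hfin, hgrow, ?_⟩
  intro V hV
  by_cases hq : ∃ e qi qo, h.lab e = Sum.inr (qi, qo) ∧
      {u | u ∈ h.upd ∧ vis u e} = V
  swap
  · exact ⟨O.s0, fun e qi qo hl hVe => absurd ⟨e, qi, qo, hl, hVe⟩ hq⟩
  obtain ⟨e0, qi0, qo0, hlab0, hV0⟩ := hq
  obtain ⟨w0, hw0, st0, hst00, hspec0⟩ := hrec e0 ⟨_, hlab0⟩
  rw [hV0] at hw0
  obtain ⟨m0, hm0⟩ := hw0.2.1 e0 (Or.inr rfl)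
  have he0V : e0 ∉ V := by
    intro hmem
    obtain ⟨u, hu⟩ := hV hmem
    rw [hlab0] at hu
    exact absurd hu (by simp)
  have hVle0 : ∀ a ∈ V, ¬ (le e0 a ∧ e0 ≠ a) := by
    rintro a ha ⟨hle, hne⟩
    have ha' : a ∈ {u | u ∈ h.upd ∧ vis u e0} := by rw [hV0]; exact ha
    exact hne (Std.Antisymm.antisymm (r := le) e0 a hle (hvisle a e0 ha'.2))
  refine ⟨st0 m0, ?_⟩
  intro e qi qo hlab hVe
  obtain ⟨w, hw, st, hst0', hspec⟩ := hrec e ⟨_, hlab⟩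
  rw [hVe] at hw
  have heV : e ∉ V := by
    intro hmem
    obtain ⟨u, hu⟩ := hV hmem
    rw [hlab] at hu
    exact absurd hu (by simp)
  have hVle : ∀ a ∈ V, le a e ∧ a ≠ e := by
    intro a ha
    have ha' : a ∈ {u | u ∈ h.upd ∧ vis u e} := by rw [hVe]; exact ha
    refine ⟨hvisle a e ha'.2, ?_⟩
    intro hcon
    obtain ⟨u, hu⟩ := ha'.1
    rw [hcon, hlab] at hu
    exact absurd hu (by simp)
  have hw' := linz_swap heV he0V hVle hVle0 hw
  have heqw : (fun i => if w i = some e then some e0 else w i) = w0 :=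
    linz_unique htot hw' hw0
  obtain ⟨m, hm⟩ := hw.2.1 e (Or.inr rfl)
  have hw0m : w0 m = some e0 := by
    rw [← heqw]; simp only [if_pos hm]
  have hmm0 : m = m0 := hw0.1 m m0 e0 hw0m hm0
  have hlt : ∀ i < m, w i = w0 i := by
    intro i hi
    have hne : w i ≠ some e := by
      intro hcon
      exact absurd (hw.1 i m e hcon hm) (Nat.ne_of_lt hi)
    rw [← heqw]
    simp only [if_neg hne]
  have hsteq : ∀ i ≤ m, st i = st0 i := by
    intro i hi
    induction i with
    | zero => rw [hst0', hst00]
    | succ n ihn =>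
      have hn : n < m := Nat.lt_of_succ_le hi
      have ihn' := ihn (le_of_lt hn)
      have s1 := hspec n
      have s2 := hspec0 n
      rw [← hlt n hn] at s2
      cases hwn : w n with
      | none =>
        simp only [hwn] at s1 s2
        rw [s1, s2, ihn']
      | some a =>
        simp only [hwn] at s1 s2
        cases hla : h.lab a with
        | inl u =>
          simp only [hla] at s1 s2
          rw [s1, s2, ihn']
        | inr p =>
          obtain ⟨p1, p2⟩ := p
          simp only [hla] at s1 s2
          rw [s1.1, s2.1, ihn']
  have hq1 := hspec m
  simp only [hm, hlab] at hq1
  rw [← hmm0, ← hsteq m le_rfl]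
  exact hq1.2
end
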